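/- Let θ ∈ (0, π/2] and r > 0, and set t = r·e^{−iθ}. If Re(e^{2iθ}·ξ(t)) = 0, then Im(e^{2iθ}·ξ(t)) < 0. (Equivalently: the curve r ↦ e^{2iθ}·ξ(r·e^{−iθ}) crosses the imaginary axis only in its negative half, which is the key step in showing that arg(e^{2iθ}·ξ(t)) < 0 along the whole ray.) -/

import Mathlib

open Complex Real

/-- The branch `R(t) = √(t-1)·√(t+1)` with principal complex square roots. -/
noncomputable def Rb (t : ℂ) : ℂ := (t - 1) ^ ((1 : ℂ)/2) * (t + 1) ^ ((1 : ℂ)/2)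

/-- `ξ(t) = (1/2)(t·R(t) − Log(t + R(t)))` with the principal logarithm. -/
noncomputable def xi (t : ℂ) : ℂ := (1/2 : ℂ) * (t * Rb t - Complex.log (t + Rb t))

/-- `sinh x ≤ x cosh x` for `x ≥ 0`. -/
lemma sinh_le_mul_cosh {x : ℝ} (hx : 0 ≤ x) : Real.sinh x ≤ x * Real.cosh x := by
  have hf : ∀ y : ℝ, HasDerivAt (fun y : ℝ => y * Real.cosh y - Real.sinh y)
      (y * Real.sinh y) y := by
    intro y
    have h1 : HasDerivAt (fun y : ℝ => y * Real.cosh y)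
        (1 * Real.cosh y + y * Real.sinh y) y :=
      (hasDerivAt_id y).mul (Real.hasDerivAt_cosh y)
    have h2 := Real.hasDerivAt_sinh y
    have := h1.sub h2
    exact this.congr_deriv (by ring)
  have mono : MonotoneOn (fun y : ℝ => y * Real.cosh y - Real.sinh y) (Set.Ici 0) := by
    apply monotoneOn_of_deriv_nonneg (convex_Ici 0)
    · exact ((continuous_id.mul Real.continuous_cosh).sub Real.continuous_sinh).continuousOn
    · exact fun y _ => (hf y).differentiableAt.differentiableWithinAt
    · intro y hy
      rw [(hf y).deriv]
      rw [interior_Ici] at hy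
      exact mul_nonneg (le_of_lt hy) (Real.sinh_nonneg_iff.2 (le_of_lt hy))
  have h0 := mono (Set.self_mem_Ici) (Set.mem_Ici.2 hx) hx
  simp at h0
  linarith

set_option maxHeartbeats 1000000 in
/-- The key real inequality. -/
lemma keyReal {u v : ℝ} (hu : 0 < u) (hv : 0 < v) (hvπ : v ≤ π)
    (hB : (Real.sinh u * Real.cos v - u) * (1 + Real.cosh u * Real.cos v)
      + (Real.cosh u * Real.sin v - v) * (Real.sinh u * Real.sin v) = 0) :
    (Real.sinh u * Real.cos v - u) * (Real.sinh u * Real.sin v)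
      - (Real.cosh u * Real.sin v - v) * (1 + Real.cosh u * Real.cos v) < 0 := by
  set S := Real.sinh u with hSdef
  set C := Real.cosh u with hCdef
  set s := Real.sin v with hsdef
  set c := Real.cos v with hcdef
  have hS : 0 < S := Real.sinh_pos_iff.2 hu
  have hC : 1 < C := by
    rw [hCdef]
    exact (Real.one_lt_cosh).2 (ne_of_gt hu)
  have hC2 : C ^ 2 - S ^ 2 = 1 := Real.cosh_sq_sub_sinh_sq u
  have hsc : s ^ 2 + c ^ 2 = 1 := Real.sin_sq_add_cos_sq v
  have hc1 : -1 ≤ c := Real.neg_one_le_cos v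
  have hs0 : 0 ≤ s := Real.sin_nonneg_of_nonneg_of_le_pi (le_of_lt hv) hvπ
  have hScux : S ≤ u * C := sinh_le_mul_cosh (le_of_lt hu)
  by_contra hcon
  push_neg at hcon
  -- hcon : 0 ≤ A where A = X*Q - Y*P
  have hA : (S * c - u) * (S * s) - (C * s - v) * (1 + C * c)
      = v * (1 + C * c) - s * (c + C) - u * S * s := by
    linear_combination (-(s * c)) * hC2
  rw [hA] at hcon
  -- v = π is impossible
  have hvπ' : v < π := by
    rcases lt_or_eq_of_le hvπ with h | h
    · exact h
    · exfalso
      have hs' : s = 0 := by rw [hsdef, h, Real.sin_pi]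
      have hc' : c = -1 := by rw [hcdef, h, Real.cos_pi]
      rw [hs', hc'] at hcon
      nlinarith
  have hs : 0 < s := Real.sin_pos_of_pos_of_lt_pi hv hvπ'
  -- 1 + C*c > 0
  have hP : 0 < 1 + C * c := by
    by_contra hP'
    push_neg at hP'
    have h1 : 0 < s * (c + C) := mul_pos hs (by nlinarith)
    have h2 : 0 < u * S * s := by positivity
    nlinarith
  have hineq : s * (c + C) + u * S * s ≤ v * (1 + C * c) := by linarith
  rcases le_or_gt u (c * S) with hcase | hcase
  · -- Case X ≥ 0 : contradiction with hcon directly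
    have hc : 0 < c := by
      by_contra hcc
      push_neg at hcc
      have : c * S ≤ 0 := mul_nonpos_of_nonpos_of_nonneg hcc (le_of_lt hS)
      linarith
    have hv2 : v < π / 2 := by
      by_contra hv2'
      push_neg at hv2'
      have hcle : Real.cos v ≤ 0 :=
        Real.cos_nonpos_of_pi_div_two_le_of_le hv2' (by linarith)
      rw [← hcdef] at hcle
      linarith
    have htan : v < s / c := by
      have := Real.lt_tan hv hv2
      rwa [Real.tan_eq_sin_div_cos, ← hsdef, ← hcdef] at this
    have hvc : c * v < s := by
      rw [lt_div_iff₀ hc] at htan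
      linarith [htan]
    -- s^2 ≤ u * (c * S)
    have hk0 : S * S ≤ (u * C) * (u * C) :=
      mul_le_mul hScux hScux (le_of_lt hS) (by positivity)
    have hk1 : S ^ 2 ≤ u ^ 2 + u ^ 2 * S ^ 2 := by
      clear hcon hB hineq hA
      nlinarith [hk0, hC2]
    have q1 : u * u ≤ u * (c * S) := mul_le_mul_of_nonneg_left hcase (le_of_lt hu)
    have q2 : u * u ≤ (c * S) * (c * S) :=
      mul_le_mul hcase hcase (le_of_lt hu) (by positivity)
    have q3 : s ^ 2 * S ^ 2 ≤ u ^ 2 * S ^ 2 := by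
      clear hcon hB hineq hA
      nlinarith [q2, hk1, hsc]
    have q4 : s ^ 2 ≤ u ^ 2 := by
      have hS2 : (0:ℝ) < S ^ 2 := by positivity
      exact le_of_mul_le_mul_right q3 hS2
    have hs2 : s ^ 2 ≤ u * (c * S) := by
      clear hcon hB hineq hA
      nlinarith [q1, q4]
    have m1 : c * v * (1 + C * c) < s * (1 + C * c) :=
      mul_lt_mul_of_pos_right hvc hP
    have m2 : 0 ≤ c * (v * (1 + C * c) - s * (c + C) - u * S * s) :=
      mul_nonneg (le_of_lt hc) hcon
    have m3 : 0 < s * (1 + C * c) - c * s * (c + C) - u * c * S * s := by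
      clear hcon hB hineq hA
      nlinarith [m1, m2]
    have m4 : s * (1 + C * c) - c * s * (c + C) - u * c * S * s
        = s * s ^ 2 - s * (u * (c * S)) := by linear_combination (-s) * hsc
    have m5 : s * s ^ 2 ≤ s * (u * (c * S)) :=
      mul_le_mul_of_nonneg_left hs2 (le_of_lt hs)
    linarith [m3, m4.symm, m5]
  · -- Case c*S < u
    have hBeq : c * (S - u * C) + (S * C - u) - v * S * s = 0 := by
      linear_combination hB - S * C * hsc
    have hb2 : c * (S - u * C) + (S * C - u) = v * S * s := by linarith
    have hid : (1 + C * c) * (c * (S - u * C) + (S * C - u)) - S * s ^ 2 * (c + C + u * S)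
        = (c * S - u) * (C + c) ^ 2 := by
      linear_combination (-(S * c + S * C + u * S ^ 2)) * hsc + u * (1 - c ^ 2) * hC2
    have h5 : 0 ≤ (c * S - u) * (C + c) ^ 2 := by
      have heq : (c * S - u) * (C + c) ^ 2
          = S * s * (v * (1 + C * c) - (s * (c + C) + u * S * s)) := by
        linear_combination (1 + C * c) * hb2 - hid
      rw [heq]
      exact mul_nonneg (mul_nonneg (le_of_lt hS) (le_of_lt hs)) (by linarith)
    have h6 : (c * S - u) * (C + c) ^ 2 < 0 :=
      mul_neg_of_neg_of_pos (by linarith) (pow_pos (by linarith) 2)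
    linarith

/-- Square root of a number in the lower half-plane lies in the open fourth quadrant. -/
lemma half_pow_quadrant {z : ℂ} (hz : z.im < 0) :
    0 < (z ^ ((1 : ℂ)/2)).re ∧ (z ^ ((1 : ℂ)/2)).im < 0 := by
  have hz0 : z ≠ 0 := by
    intro h
    rw [h] at hz
    simp at hz
  rw [Complex.cpow_def_of_ne_zero hz0]
  have harg1 : Complex.arg z < 0 := Complex.arg_neg_iff.2 hz
  have harg2 : -π < Complex.arg z := Complex.neg_pi_lt_arg z
  have him : (Complex.log z * ((1:ℂ)/2)).im = Complex.arg z / 2 := by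
    simp [Complex.mul_im, Complex.log_im, Complex.log_re]
    ring
  have hre : (Complex.log z * ((1:ℂ)/2)).re = (Complex.log z).re / 2 := by
    simp [Complex.mul_re, Complex.log_im]
    ring
  rw [Complex.exp_re, Complex.exp_im, him, hre]
  constructor
  · apply mul_pos (Real.exp_pos _)
    apply Real.cos_pos_of_mem_Ioo
    constructor <;> [linarith; linarith]
  · apply mul_neg_of_pos_of_neg (Real.exp_pos _)
    apply Real.sin_neg_of_neg_of_neg_pi_lt (by linarith) (by linarith)

set_option maxHeartbeats 1600000 in
theorem stmt3 (θ r : ℝ) (hθ : θ ∈ Set.Ioc 0 (π/2)) (hr : 0 < r)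
    (t : ℂ) (ht : t = (r : ℂ) * Complex.exp (-(θ : ℂ) * Complex.I))
    (hre : (Complex.exp (2 * (θ : ℂ) * Complex.I) * xi t).re = 0) :
    (Complex.exp (2 * (θ : ℂ) * Complex.I) * xi t).im < 0 := by
  obtain ⟨hθ0, hθπ⟩ := hθ
  have hπ := Real.pi_pos
  have hsinθ : 0 < Real.sin θ := Real.sin_pos_of_pos_of_lt_pi hθ0 (by linarith)
  have hcosθ : 0 ≤ Real.cos θ := Real.cos_nonneg_of_mem_Icc ⟨by linarith, hθπ⟩
  -- re/im of t
  have hexp1 : Complex.exp (-(θ : ℂ) * Complex.I) = ((Real.cos θ : ℝ) : ℂ) - ((Real.sin θ : ℝ) : ℂ) * Complex.I := by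
    have : (-(θ : ℂ)) * Complex.I = ((-θ : ℝ) : ℂ) * Complex.I := by push_cast; ring
    rw [this, Complex.exp_mul_I]
    rw [← Complex.ofReal_cos, ← Complex.ofReal_sin]
    rw [Real.cos_neg, Real.sin_neg]
    push_cast
    ring
  have ht' : t = ((r * Real.cos θ : ℝ) : ℂ) + ((-(r * Real.sin θ) : ℝ) : ℂ) * Complex.I := by
    rw [ht, hexp1]
    push_cast
    ring
  have htre : t.re = r * Real.cos θ := by
    rw [ht']
    simp only [Complex.add_re, Complex.ofReal_re, Complex.mul_re, Complex.I_re, Complex.I_im,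
      Complex.ofReal_im, mul_zero, mul_one, zero_mul, sub_zero, add_zero, zero_add]
  have htim : t.im = -(r * Real.sin θ) := by
    rw [ht']
    simp only [Complex.add_im, Complex.ofReal_im, Complex.mul_im, Complex.I_re, Complex.I_im,
      Complex.ofReal_re, mul_zero, mul_one, zero_mul, sub_zero, add_zero, zero_add]
  have htim0 : t.im < 0 := by rw [htim]; nlinarith
  have htre0 : 0 ≤ t.re := by rw [htre]; positivity
  have htne : t ≠ 0 := by
    intro h
    rw [h] at htim0
    simp at htim0
  -- basic branch facts
  have h1ne : t - 1 ≠ 0 := by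
    intro h
    have : (t - 1).im = 0 := by rw [h]; simp
    simp at this
    rw [this] at htim0
    exact lt_irrefl 0 htim0
  have h2ne : t + 1 ≠ 0 := by
    intro h
    have : (t + 1).im = 0 := by rw [h]; simp
    simp at this
    rw [this] at htim0
    exact lt_irrefl 0 htim0
  have h1im : (t - 1).im < 0 := by simpa using htim0
  have h2im : (t + 1).im < 0 := by simpa using htim0
  set R := Rb t with hR
  have hsq : R ^ 2 = t ^ 2 - 1 := by
    have e1 : (t - 1) ^ ((1:ℂ)/2) * (t - 1) ^ ((1:ℂ)/2) = t - 1 := by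
      rw [← Complex.cpow_add _ _ h1ne]
      norm_num
    have e2 : (t + 1) ^ ((1:ℂ)/2) * (t + 1) ^ ((1:ℂ)/2) = t + 1 := by
      rw [← Complex.cpow_add _ _ h2ne]
      norm_num
    rw [hR]
    show ((t - 1) ^ ((1:ℂ)/2) * (t + 1) ^ ((1:ℂ)/2)) ^ 2 = t ^ 2 - 1
    rw [mul_pow, pow_two, pow_two, e1, e2]
    ring
  obtain ⟨hw1re, hw1im⟩ := half_pow_quadrant h1im
  obtain ⟨hw2re, hw2im⟩ := half_pow_quadrant h2im
  have hRim : R.im < 0 := by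
    rw [hR]
    unfold Rb
    rw [Complex.mul_im]
    nlinarith
  have hRre : 0 ≤ R.re := by
    have him2 : (R ^ 2).im = 2 * R.re * R.im := by
      rw [sq, Complex.mul_im]; ring
    have him2' : (t ^ 2 - 1).im = 2 * t.re * t.im := by
      rw [sq, Complex.sub_im, Complex.mul_im]; simp; ring
    have : 2 * R.re * R.im = 2 * t.re * t.im := by rw [← him2, hsq, him2']
    nlinarith
  set sc := t + R with hscdef
  have hsim : sc.im < 0 := by
    rw [hscdef, Complex.add_im]
    linarith
  have hsre : 0 ≤ sc.re := by
    rw [hscdef, Complex.add_re]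
    linarith
  have hsne : sc ≠ 0 := by
    intro h
    have : sc.im = 0 := by rw [h]; simp
    linarith
  have hinv : (t - R) * sc = 1 := by
    rw [hscdef]
    linear_combination -hsq
  -- |sc| > 1
  have habs : 1 < ‖sc‖ := by
    have hns : Complex.normSq (t - R) < Complex.normSq sc := by
      rw [Complex.normSq_apply, Complex.normSq_apply, hscdef]
      simp only [Complex.add_re, Complex.add_im, Complex.sub_re, Complex.sub_im]
      nlinarith [mul_nonneg htre0 hRre, mul_pos_of_neg_of_neg htim0 hRim]
    have hprod : Complex.normSq (t - R) * Complex.normSq sc = 1 := by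
      rw [← Complex.normSq_mul, hinv, Complex.normSq_one]
    have hnspos : 0 < Complex.normSq sc := Complex.normSq_pos.2 hsne
    have h1 : 1 < Complex.normSq sc := by nlinarith
    have := Complex.sq_norm sc
    nlinarith [norm_nonneg sc, h1, this]
  set L := Complex.log sc with hL
  have hLre : 0 < L.re := by
    rw [hL, Complex.log_re]
    exact Real.log_pos habs
  have hLim1 : L.im < 0 := by
    rw [hL, Complex.log_im]
    exact Complex.arg_neg_iff.2 hsim
  have hLim2 : -(π/2) ≤ L.im := by
    rw [hL, Complex.log_im]
    exact Complex.neg_pi_div_two_le_arg_iff.2 (Or.inl hsre)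
  have hexpL : Complex.exp L = sc := Complex.exp_log hsne
  have hexpnL : Complex.exp (-L) = t - R := by
    rw [Complex.exp_neg, hexpL]
    exact inv_eq_of_mul_eq_one_left hinv
  have hcosh : Complex.cosh L = t := by
    rw [show Complex.cosh L = (Complex.exp L + Complex.exp (-L)) / 2 from rfl]
    rw [hexpL, hexpnL, hscdef]
    ring
  have hsinh : Complex.sinh L = R := by
    rw [show Complex.sinh L = (Complex.exp L - Complex.exp (-L)) / 2 from rfl]
    rw [hexpL, hexpnL, hscdef]
    ring
  set z := (2 : ℂ) * L with hz
  have hsinhz : Complex.sinh z = 2 * R * t := by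
    rw [hz, Complex.sinh_two_mul, hcosh, hsinh]
  have hcoshz : Complex.cosh z = 2 * t ^ 2 - 1 := by
    rw [hz, Complex.cosh_two_mul, hcosh]
    have : Complex.sinh L ^ 2 = Complex.cosh L ^ 2 - 1 := by
      linear_combination -(Complex.cosh_sq_sub_sinh_sq L)
    rw [this, hcosh]
    ring
  have hxiz : xi t = (1/4 : ℂ) * (Complex.sinh z - z) := by
    rw [hsinhz, hz]
    unfold xi
    rw [← hR, ← hscdef, ← hL]
    ring
  -- exp (2θi) * t^2 = r^2
  have hexp2 : Complex.exp (2 * (θ : ℂ) * Complex.I) * t ^ 2 = ((r : ℝ) : ℂ) ^ 2 := by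
    have e : Complex.exp (-(θ:ℂ) * Complex.I) * Complex.exp (-(θ:ℂ) * Complex.I)
        = Complex.exp (-(2 * (θ:ℂ) * Complex.I)) := by
      rw [← Complex.exp_add]
      congr 1
      ring
    have e2 : Complex.exp (2 * (θ:ℂ) * Complex.I) * Complex.exp (-(2 * (θ:ℂ) * Complex.I)) = 1 := by
      rw [← Complex.exp_add]
      simp
    calc Complex.exp (2 * (θ:ℂ) * Complex.I) * t ^ 2
        = (r:ℂ) ^ 2 * (Complex.exp (2 * (θ:ℂ) * Complex.I)
            * (Complex.exp (-(θ:ℂ) * Complex.I) * Complex.exp (-(θ:ℂ) * Complex.I))) := by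
          rw [ht]; ring
      _ = (r:ℂ) ^ 2 * (Complex.exp (2 * (θ:ℂ) * Complex.I)
            * Complex.exp (-(2 * (θ:ℂ) * Complex.I))) := by rw [e]
      _ = (r:ℂ) ^ 2 := by rw [e2]; ring
  -- set u, v
  set u := 2 * L.re with hu
  set v := -(2 * L.im) with hv
  have hu0 : 0 < u := by rw [hu]; linarith
  have hv0 : 0 < v := by rw [hv]; linarith
  have hvπ : v ≤ π := by rw [hv]; linarith
  have hzre : z = ((u : ℝ) : ℂ) + ((-v : ℝ) : ℂ) * Complex.I := by
    rw [hz, hu, hv]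
    apply Complex.ext <;> simp
  -- components of N and D
  have hsinhz2 : Complex.sinh z
      = ((Real.sinh u * Real.cos v : ℝ) : ℂ) - ((Real.cosh u * Real.sin v : ℝ) : ℂ) * Complex.I := by
    rw [hzre, Complex.sinh_add, Complex.sinh_mul_I, Complex.cosh_mul_I]
    rw [← Complex.ofReal_sinh, ← Complex.ofReal_cosh, ← Complex.ofReal_sin, ← Complex.ofReal_cos]
    rw [Real.sin_neg, Real.cos_neg]
    push_cast
    ring
  have hcoshz2 : Complex.cosh z
      = ((Real.cosh u * Real.cos v : ℝ) : ℂ) - ((Real.sinh u * Real.sin v : ℝ) : ℂ) * Complex.I := by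
    rw [hzre, Complex.cosh_add, Complex.sinh_mul_I, Complex.cosh_mul_I]
    rw [← Complex.ofReal_sinh, ← Complex.ofReal_cosh, ← Complex.ofReal_sin, ← Complex.ofReal_cos]
    rw [Real.sin_neg, Real.cos_neg]
    push_cast
    ring
  set N := Complex.sinh z - z with hN
  set D := Complex.cosh z + 1 with hD
  have hNre : N.re = Real.sinh u * Real.cos v - u := by
    rw [hN, hsinhz2, hzre]
    simp [Complex.sinh_ofReal_re, Complex.sinh_ofReal_im, Complex.cosh_ofReal_re, Complex.cosh_ofReal_im, Complex.cos_ofReal_re, Complex.cos_ofReal_im, Complex.sin_ofReal_re, Complex.sin_ofReal_im]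
  have hNim : N.im = -(Real.cosh u * Real.sin v - v) := by
    rw [hN, hsinhz2, hzre]
    simp [Complex.sinh_ofReal_re, Complex.sinh_ofReal_im, Complex.cosh_ofReal_re, Complex.cosh_ofReal_im, Complex.cos_ofReal_re, Complex.cos_ofReal_im, Complex.sin_ofReal_re, Complex.sin_ofReal_im]
    ring
  have hDre : D.re = 1 + Real.cosh u * Real.cos v := by
    rw [hD, hcoshz2]
    simp [Complex.sinh_ofReal_re, Complex.sinh_ofReal_im, Complex.cosh_ofReal_re, Complex.cosh_ofReal_im, Complex.cos_ofReal_re, Complex.cos_ofReal_im, Complex.sin_ofReal_re, Complex.sin_ofReal_im]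
    ring
  have hDim : D.im = -(Real.sinh u * Real.sin v) := by
    rw [hD, hcoshz2]
    simp [Complex.sinh_ofReal_re, Complex.sinh_ofReal_im, Complex.cosh_ofReal_re, Complex.cosh_ofReal_im, Complex.cos_ofReal_re, Complex.cos_ofReal_im, Complex.sin_ofReal_re, Complex.sin_ofReal_im]
  have hDval : D = 2 * t ^ 2 := by
    rw [hD, hcoshz]
    ring
  have hDne : D ≠ 0 := by
    rw [hDval]
    exact mul_ne_zero two_ne_zero (pow_ne_zero 2 htne)
  have hnsD : 0 < Complex.normSq D := Complex.normSq_pos.2 hDne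
  -- W = (r^2/2) * (N / D)
  have hW : Complex.exp (2 * (θ : ℂ) * Complex.I) * xi t
      = (((r ^ 2 / 2 : ℝ)) : ℂ) * (N / D) := by
    rw [hxiz, hDval]
    have ht2 : (2 : ℂ) * t ^ 2 ≠ 0 := mul_ne_zero two_ne_zero (pow_ne_zero 2 htne)
    rw [← mul_div_assoc, eq_div_iff ht2]
    push_cast
    linear_combination (N / 2) * hexp2
  -- extract the real condition
  have hGre : N.re * D.re + N.im * D.im = 0 := by
    have h1 : (Complex.exp (2 * (θ : ℂ) * Complex.I) * xi t).re
        = (r ^ 2 / 2) * ((N / D).re) := by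
      rw [hW, Complex.mul_re]
      simp only [Complex.ofReal_re, Complex.ofReal_im, zero_mul, sub_zero]
    rw [h1] at hre
    have hr2 : (0:ℝ) < r ^ 2 / 2 := by positivity
    have h2 : (N / D).re = 0 := by
      rcases mul_eq_zero.1 hre with h | h
      · linarith
      · exact h
    rw [Complex.div_re, ← add_div] at h2
    rcases div_eq_zero_iff.1 h2 with h3 | h3
    · exact h3
    · exact absurd h3 (ne_of_gt hnsD)
  -- apply the key real lemma
  have hkey := keyReal hu0 hv0 hvπ (by
    rw [hNre, hNim, hDre, hDim] at hGre
    linear_combination hGre)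
  -- conclude
  have hGim : (N / D).im < 0 := by
    rw [Complex.div_im]
    rw [hNre, hNim, hDre, hDim]
    have : -(Real.cosh u * Real.sin v - v) * (1 + Real.cosh u * Real.cos v) / Complex.normSq D
        - (Real.sinh u * Real.cos v - u) * -(Real.sinh u * Real.sin v) / Complex.normSq D
        = ((Real.sinh u * Real.cos v - u) * (Real.sinh u * Real.sin v)
          - (Real.cosh u * Real.sin v - v) * (1 + Real.cosh u * Real.cos v)) / Complex.normSq D := by
      ring
    rw [this]
    exact div_neg_of_neg_of_pos hkey hnsD
  rw [hW, Complex.mul_im]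
  simp only [Complex.ofReal_re, Complex.ofReal_im, zero_mul, add_zero]
  have hr2 : (0:ℝ) < r ^ 2 / 2 := by positivity
  exact mul_neg_of_pos_of_neg hr2 hGim
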